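/- For every finite nonempty graph G there exists a linear order < on its vertex set such that (G,<) is a breadth-first traversal, i.e., for all vertices u < v < w, if u is adjacent to w then there exists x with x < v, x ≤ u, and x adjacent to v. -/

import Mathlib

section BFS

variable {V : Type*} [Fintype V] [DecidableEq V]

open Classical in
/-- Position of the earliest neighbor of `v` in the list `l` (or `l.length` if none). -/
noncomputable def bfsKey (G : SimpleGraph V) (l : List V) (v : V) : ℕ :=
  l.findIdx (fun x => decide (G.Adj x v))

/-- The next vertex for BFS: an unplaced vertex with minimal key. -/
noncomputable def bfsNext (G : SimpleGraph V) (l : List V)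
    (h : (Finset.univ \ l.toFinset).Nonempty) : V :=
  (Finset.exists_min_image _ (bfsKey G l) h).choose

theorem bfsNext_spec (G : SimpleGraph V) (l : List V)
    (h : (Finset.univ \ l.toFinset).Nonempty) :
    bfsNext G l h ∈ Finset.univ \ l.toFinset ∧
      ∀ w ∈ Finset.univ \ l.toFinset, bfsKey G l (bfsNext G l h) ≤ bfsKey G l w := by
  obtain ⟨h1, h2⟩ := (Finset.exists_min_image _ (bfsKey G l) h).choose_spec
  exact ⟨h1, h2⟩

theorem bfsNext_not_mem (G : SimpleGraph V) (l : List V)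
    (h : (Finset.univ \ l.toFinset).Nonempty) : bfsNext G l h ∉ l := by
  have := (bfsNext_spec G l h).1
  simp only [Finset.mem_sdiff, List.mem_toFinset] at this
  exact this.2

noncomputable def bfsExt (G : SimpleGraph V) (l : List V) : List V :=
  if h : (Finset.univ \ l.toFinset).Nonempty then bfsExt G (l ++ [bfsNext G l h]) else l
termination_by (Finset.univ \ l.toFinset).card
decreasing_by
  apply Finset.card_lt_card
  constructor
  · apply Finset.sdiff_subset_sdiff (le_refl _)
    intro x hx
    simp only [List.toFinset_append, List.toFinset_cons, List.toFinset_nil,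
      Finset.mem_union] at *
    exact Or.inl hx
  · intro hsub
    have hm := (bfsNext_spec G l h).1
    have := hsub hm
    simp at this

theorem bfsExt_prefix (G : SimpleGraph V) (l : List V) : l <+: bfsExt G l := by
  induction l using bfsExt.induct G with
  | case1 l h ih =>
    rw [bfsExt, dif_pos h]
    exact List.IsPrefix.trans ⟨[bfsNext G l h], rfl⟩ ih
  | case2 l h =>
    rw [bfsExt, dif_neg h]

theorem mem_bfsExt (G : SimpleGraph V) (l : List V) (v : V) : v ∈ bfsExt G l := by
  induction l using bfsExt.induct G with
  | case1 l h ih =>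
    rw [bfsExt, dif_pos h]; exact ih
  | case2 l h =>
    rw [bfsExt, dif_neg h]
    rw [Finset.nonempty_iff_ne_empty, not_not, Finset.sdiff_eq_empty_iff_subset] at h
    have := h (Finset.mem_univ v)
    simpa using this

theorem bfsExt_nodup (G : SimpleGraph V) (l : List V) (hn : l.Nodup) :
    (bfsExt G l).Nodup := by
  induction l using bfsExt.induct G with
  | case1 l h ih =>
    rw [bfsExt, dif_pos h]
    apply ih
    simpa [List.nodup_append] using ⟨hn, fun a ha hEq => bfsNext_not_mem G l h (hEq ▸ ha)⟩
  | case2 l h =>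
    rwa [bfsExt, dif_neg h]

/-- The key BFS property of the constructed enumeration. -/
theorem bfs_main (G : SimpleGraph V) (l : List V) (hn : l.Nodup)
    (L : List V) (hL : bfsExt G l = L)
    (j i k : ℕ) (hj : l.length ≤ j) (hij : i < j) (hjk : j < k)
    (hk : k < L.length)
    (hadj : G.Adj (L[i]'(by omega)) (L[k])) :
    ∃ m, ∃ hm : m < L.length, m ≤ i ∧
      G.Adj (L[m]) (L[j]'(by omega)) := by
  induction l using bfsExt.induct G generalizing j with
  | case1 l h ih =>
    have hnod' : (l ++ [bfsNext G l h]).Nodup := by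
      simpa [List.nodup_append] using ⟨hn, fun a ha hEq => bfsNext_not_mem G l h (hEq ▸ ha)⟩
    have hL' : bfsExt G (l ++ [bfsNext G l h]) = L := by
      rw [← hL]
      conv_rhs => rw [bfsExt, dif_pos h]
    rcases Nat.lt_or_ge j (l.length + 1) with hj' | hj'
    · -- j = l.length : this is the step where L[j] was chosen
      have hjeq : j = l.length := by omega
      subst hjeq
      have hpre : (l ++ [bfsNext G l h]) <+: L := hL' ▸ bfsExt_prefix G _
      have hlen : l.length + 1 ≤ L.length := by
        have := hpre.length_le; simpa using this
      have hLj : L[l.length]'(by omega) = bfsNext G l h := by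
        rw [← hpre.getElem (by simp)]
        simp
      have hLi : ∀ i' (hi' : i' < l.length), L[i']'(by omega) = l[i'] := by
        intro i' hi'
        rw [← hpre.getElem (by simp; omega)]
        simp [List.getElem_append_left, hi']
      have hLnod : L.Nodup := hL' ▸ bfsExt_nodup G _ hnod'
      have hkl : L[k] ∉ l := by
        intro hmem
        obtain ⟨i', hi', hval⟩ := List.getElem_of_mem hmem
        have : L[i']'(by omega) = L[k] := by rw [hLi i' hi', hval]
        have := (hLnod.getElem_inj_iff).mp this
        omega
      have hkmem : L[k] ∈ Finset.univ \ l.toFinset := by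
        simp [hkl]
      have hadj' : G.Adj (l[i]'(by omega)) (L[k]) := by
        rw [← hLi i (by omega)]; exact hadj
      have hkeyk : bfsKey G l (L[k]) ≤ i := by
        by_contra hlt
        push_neg at hlt
        have := List.not_of_lt_findIdx (p := fun x =>
          @decide (G.Adj x (L[k])) (Classical.propDecidable _)) (xs := l) (i := i) hlt
        rw [decide_eq_false_iff_not] at this
        exact this hadj'
      have hkeyc : bfsKey G l (bfsNext G l h) ≤ i :=
        le_trans ((bfsNext_spec G l h).2 _ hkmem) hkeyk
      set m := bfsKey G l (bfsNext G l h) with hm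
      have hmlt : m < l.length := by omega
      have hpadj : G.Adj (l[m]'hmlt) (bfsNext G l h) := by
        have := List.findIdx_getElem (p := fun x =>
          @decide (G.Adj x (bfsNext G l h)) (Classical.propDecidable _)) (xs := l) (w := hmlt)
        exact @of_decide_eq_true _ (Classical.propDecidable _) this
      refine ⟨m, by omega, hkeyc, ?_⟩
      rw [hLi m hmlt, hLj]
      exact hpadj
    · exact ih hnod' hL' j (by simpa using hj') hij hjk hadj
  | case2 l h =>
    rw [bfsExt, dif_neg h] at hL
    subst hL
    omega

end BFS

/-- Every finite nonempty graph admits a breadth-first traversal: a linear order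
`<` on its vertices such that for all `u < v < w`, if `u` is adjacent to `w`
then some `x` with `x < v` and `x ≤ u` is adjacent to `v`. -/
theorem exists_bft {V : Type*} [Fintype V] [Nonempty V] (G : SimpleGraph V) :
    ∃ L : LinearOrder V, ∀ u v w : V, L.lt u v → L.lt v w → G.Adj u w →
      ∃ x : V, L.lt x v ∧ L.le x u ∧ G.Adj x v := by
  classical
  set Lst := bfsExt G ([] : List V) with hLst
  have hmem : ∀ v : V, v ∈ Lst := mem_bfsExt G []
  have hnod : Lst.Nodup := bfsExt_nodup G [] List.nodup_nil
  set idx : V → ℕ := fun v => Lst.idxOf v with hidx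
  have hidxlt : ∀ v, idx v < Lst.length := fun v => List.idxOf_lt_length_iff.mpr (hmem v)
  have hget : ∀ v, Lst[idx v]'(hidxlt v) = v := fun v => List.getElem_idxOf (hidxlt v)
  have hinj : Function.Injective idx := by
    intro a b hab
    have : Lst[idx a]'(hidxlt a) = Lst[idx b]'(hidxlt b) := by congr 1
    rwa [hget, hget] at this
  refine ⟨LinearOrder.lift' idx hinj, ?_⟩
  intro u v w huv hvw hadj
  have huv' : idx u < idx v := huv
  have hvw' : idx v < idx w := hvw
  have hadj' : G.Adj (Lst[idx u]'(hidxlt u)) (Lst[idx w]'(hidxlt w)) := by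
    rw [hget, hget]; exact hadj
  obtain ⟨m, hm, hmi, hmadj⟩ := bfs_main G [] List.nodup_nil Lst rfl (idx v) (idx u) (idx w)
    (by simp) huv' hvw' (hidxlt w) hadj'
  refine ⟨Lst[m]'hm, ?_, ?_, ?_⟩
  · show idx (Lst[m]'hm) < idx v
    have : idx (Lst[m]'hm) = m := by
      have h1 := hget (Lst[m]'hm)
      exact (hnod.getElem_inj_iff).mp h1
    omega
  · show idx (Lst[m]'hm) ≤ idx u
    have : idx (Lst[m]'hm) = m := by
      have h1 := hget (Lst[m]'hm)
      exact (hnod.getElem_inj_iff).mp h1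
    omega
  · have := hmadj
    rwa [hget v] at this
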